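/- arXiv:2409.01851 — 4 statements merged into one kernel-verified Lean document; each statement's English description precedes it below -/
import Mathlib

section
/- For every x ≠ 0, the solution of (ẋ, ẏ, ż) = (-z - 1, y, x + y) starting at (x, 0, 0) satisfies z(t) > 0 for t ∈ (0, 2 arctan x) and z(2 arctan x) = 0; moreover the solution of (ẋ, ẏ, ż) = (-z + 1, y, x + y) starting at (x,0,0) satisfies z(t) < 0 for t ∈ (-2 arctan x, 0) and z(-2 arctan x) = 0, and the two solutions agree at these hitting times, so that concatenating them yields a closed crossing periodic orbit through (x,0,0). -/
open Set Real

private lemma lipV (c : ℝ) : LipschitzWith 2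
    (fun p : ℝ × ℝ × ℝ => (-p.2.2 + c, p.2.1, p.1 + p.2.1)) := by
  apply LipschitzWith.of_dist_le_mul
  intro a b
  simp only [Prod.dist_eq, Real.dist_eq]
  push_cast
  have h1 : |(-a.2.2 + c) - (-b.2.2 + c)| = |a.2.2 - b.2.2| := by
    rw [← abs_neg]; ring_nf
  rw [h1]
  have h2 : |a.1 + a.2.1 - (b.1 + b.2.1)| ≤ |a.1 - b.1| + |a.2.1 - b.2.1| := by
    have := abs_add_le (a.1 - b.1) (a.2.1 - b.2.1); rw [show a.1 + a.2.1 - (b.1 + b.2.1) = (a.1 - b.1) + (a.2.1 - b.2.1) by ring]; exact this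
  have l1 : |a.1 - b.1| ≤ max |a.1 - b.1| (max |a.2.1 - b.2.1| |a.2.2 - b.2.2|) := le_max_left _ _
  have l2 : |a.2.1 - b.2.1| ≤ max |a.1 - b.1| (max |a.2.1 - b.2.1| |a.2.2 - b.2.2|) :=
    le_trans (le_max_left _ _) (le_max_right _ _)
  have l3 : |a.2.2 - b.2.2| ≤ max |a.1 - b.1| (max |a.2.1 - b.2.1| |a.2.2 - b.2.2|) :=
    le_trans (le_max_right _ _) (le_max_right _ _)
  have hM : (0:ℝ) ≤ max |a.1 - b.1| (max |a.2.1 - b.2.1| |a.2.2 - b.2.2|) :=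
    le_trans (abs_nonneg _) l1
  apply max_le (by linarith) (max_le (by linarith) (by linarith))

private lemma uniqODE {v : ℝ × ℝ × ℝ → ℝ × ℝ × ℝ} (hv : LipschitzWith 2 v)
    {f g : ℝ → ℝ × ℝ × ℝ} (hf : ∀ t, HasDerivAt f (v (f t)) t)
    (hg : ∀ t, HasDerivAt g (v (g t)) t) (h0 : f 0 = g 0) (t : ℝ) : f t = g t := by
  have key := ODE_solution_unique_of_mem_Icc (v := fun _ => v) (s := fun _ => univ)
    (K := 2) (fun _ _ => hv.lipschitzOnWith)
    (t₀ := 0) (a := -(|t| + 1)) (b := |t| + 1)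
    (by constructor <;> [nlinarith [abs_nonneg t]; nlinarith [abs_nonneg t]])
    (fun s _ => (hf s).continuousAt.continuousWithinAt)
    (fun s _ => hf s) (fun _ _ => mem_univ _)
    (fun s _ => (hg s).continuousAt.continuousWithinAt)
    (fun s _ => hg s) (fun _ _ => mem_univ _) h0
  exact key ⟨by nlinarith [abs_nonneg t, neg_abs_le t], le_trans (le_abs_self t) (by linarith)⟩

private lemma phiP_deriv (x : ℝ) (t : ℝ) :
    HasDerivAt (fun t : ℝ => (x * Real.cos t - Real.sin t, (0 : ℝ),
      x * Real.sin t + Real.cos t - 1))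
      (-(x * Real.sin t + Real.cos t - 1) - 1, (0 : ℝ), (x * Real.cos t - Real.sin t) + 0) t := by
  have h1 : HasDerivAt (fun t : ℝ => x * Real.cos t - Real.sin t)
      (-(x * Real.sin t + Real.cos t - 1) - 1) t := by
    have := ((Real.hasDerivAt_cos t).const_mul x).sub (Real.hasDerivAt_sin t)
    exact this.congr_deriv (by ring)
  have h3 : HasDerivAt (fun t : ℝ => x * Real.sin t + Real.cos t - 1)
      ((x * Real.cos t - Real.sin t) + 0) t := by
    have := (((Real.hasDerivAt_sin t).const_mul x).add (Real.hasDerivAt_cos t)).sub_const 1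
    exact this.congr_deriv (by ring)
  exact h1.prodMk ((hasDerivAt_const t (0:ℝ)).prodMk h3)

private lemma phiM_deriv (x : ℝ) (t : ℝ) :
    HasDerivAt (fun t : ℝ => (x * Real.cos t + Real.sin t, (0 : ℝ),
      x * Real.sin t - Real.cos t + 1))
      (-(x * Real.sin t - Real.cos t + 1) + 1, (0 : ℝ), (x * Real.cos t + Real.sin t) + 0) t := by
  have h1 : HasDerivAt (fun t : ℝ => x * Real.cos t + Real.sin t)
      (-(x * Real.sin t - Real.cos t + 1) + 1) t := by
    have := ((Real.hasDerivAt_cos t).const_mul x).add (Real.hasDerivAt_sin t)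
    exact this.congr_deriv (by ring)
  have h3 : HasDerivAt (fun t : ℝ => x * Real.sin t - Real.cos t + 1)
      ((x * Real.cos t + Real.sin t) + 0) t := by
    have := (((Real.hasDerivAt_sin t).const_mul x).sub (Real.hasDerivAt_cos t)).add_const 1
    exact this.congr_deriv (by ring)
  exact h1.prodMk ((hasDerivAt_const t (0:ℝ)).prodMk h3)

private lemma zpos {x t : ℝ} (ht : t ∈ Ioo 0 (2 * Real.arctan x)) :
    0 < x * Real.sin t + Real.cos t - 1 := by
  obtain ⟨ht0, ht1⟩ := ht
  have hax : 0 < Real.arctan x := by linarith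
  set θ := t / 2 with hθ
  have hθ0 : 0 < θ := by positivity
  have hθ1 : θ < Real.arctan x := by rw [hθ]; linarith
  have hθpi2 : θ < π / 2 := lt_trans hθ1 (Real.arctan_lt_pi_div_two x)
  have hs : 0 < Real.sin θ := Real.sin_pos_of_pos_of_lt_pi hθ0
    (lt_trans hθpi2 (by linarith [Real.pi_pos]))
  have hc : 0 < Real.cos θ := Real.cos_pos_of_mem_Ioo ⟨by linarith, hθpi2⟩
  have htan : Real.tan θ < x := by
    have := Real.tan_lt_tan_of_nonneg_of_lt_pi_div_two hθ0.le
      (Real.arctan_lt_pi_div_two x) hθ1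
    rwa [Real.tan_arctan] at this
  have hst : Real.sin θ < x * Real.cos θ := by
    rw [Real.tan_eq_sin_div_cos, div_lt_iff₀ hc] at htan
    linarith
  have h2θ : t = 2 * θ := by rw [hθ]; ring
  rw [h2θ, Real.sin_two_mul, Real.cos_two_mul]
  have hpyth := Real.sin_sq_add_cos_sq θ
  nlinarith

private lemma zzero (x : ℝ) :
    x * Real.sin (2 * Real.arctan x) + Real.cos (2 * Real.arctan x) - 1 = 0 := by
  set θ := Real.arctan x
  have hc : 0 < Real.cos θ := Real.cos_arctan_pos x
  have hsc : Real.sin θ = x * Real.cos θ := by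
    have := Real.tan_arctan x
    rw [Real.tan_eq_sin_div_cos] at this
    field_simp at this
    linarith [this]
  have hpyth := Real.sin_sq_add_cos_sq θ
  rw [Real.sin_two_mul, Real.cos_two_mul]
  linear_combination 2 * hpyth - 2 * Real.sin θ * hsc

/-- For `x ≠ 0`, the solution of `(ẋ,ẏ,ż) = (-z-1, y, x+y)` starting at `(x,0,0)` has
positive third component on `(0, 2 arctan x)` and vanishing third component at `2 arctan x`;
the solution of `(ẋ,ẏ,ż) = (-z+1, y, x+y)` starting at `(x,0,0)` has negative third component
on `(-2 arctan x, 0)` and vanishing third component at `-2 arctan x`; moreover the two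
solutions agree at these hitting times, yielding a closed crossing periodic orbit. -/
theorem stmt1 (x : ℝ) (hx : x ≠ 0)
    (γp γm : ℝ → ℝ × ℝ × ℝ)
    (hp0 : γp 0 = (x, 0, 0))
    (hpode : ∀ t, HasDerivAt γp
      (-(γp t).2.2 - 1, (γp t).2.1, (γp t).1 + (γp t).2.1) t)
    (hm0 : γm 0 = (x, 0, 0))
    (hmode : ∀ t, HasDerivAt γm
      (-(γm t).2.2 + 1, (γm t).2.1, (γm t).1 + (γm t).2.1) t) :
    (∀ t ∈ Ioo 0 (2 * Real.arctan x), 0 < (γp t).2.2) ∧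
    (γp (2 * Real.arctan x)).2.2 = 0 ∧
    (∀ t ∈ Ioo (-(2 * Real.arctan x)) 0, (γm t).2.2 < 0) ∧
    (γm (-(2 * Real.arctan x))).2.2 = 0 ∧
    γp (2 * Real.arctan x) = γm (-(2 * Real.arctan x)) := by
  -- identify γp with the explicit solution
  have hγp : ∀ t, γp t = (x * Real.cos t - Real.sin t, (0 : ℝ),
      x * Real.sin t + Real.cos t - 1) := by
    intro t
    refine uniqODE (v := fun p : ℝ × ℝ × ℝ => (-p.2.2 + (-1), p.2.1, p.1 + p.2.1))
      (lipV (-1)) (f := γp)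
      (g := fun t => (x * Real.cos t - Real.sin t, (0 : ℝ),
        x * Real.sin t + Real.cos t - 1)) ?_ ?_ ?_ t
    · intro s
      show HasDerivAt γp (-(γp s).2.2 + (-1), (γp s).2.1, (γp s).1 + (γp s).2.1) s
      have e : -(γp s).2.2 + (-1) = -(γp s).2.2 - 1 := by ring
      rw [e]; exact hpode s
    · intro s
      show HasDerivAt (fun t => (x * Real.cos t - Real.sin t, (0 : ℝ),
        x * Real.sin t + Real.cos t - 1))
        (-(x * Real.sin s + Real.cos s - 1) + (-1), (0 : ℝ),
          (x * Real.cos s - Real.sin s) + 0) s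
      have e : -(x * Real.sin s + Real.cos s - 1) + (-1)
          = -(x * Real.sin s + Real.cos s - 1) - 1 := by ring
      rw [e]; exact phiP_deriv x s
    · simp [hp0]
  have hγm : ∀ t, γm t = (x * Real.cos t + Real.sin t, (0 : ℝ),
      x * Real.sin t - Real.cos t + 1) := by
    intro t
    refine uniqODE (v := fun p : ℝ × ℝ × ℝ => (-p.2.2 + 1, p.2.1, p.1 + p.2.1))
      (lipV 1) (f := γm)
      (g := fun t => (x * Real.cos t + Real.sin t, (0 : ℝ),
        x * Real.sin t - Real.cos t + 1)) ?_ ?_ ?_ t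
    · intro s; exact hmode s
    · intro s
      exact phiM_deriv x s
    · simp [hm0]
  refine ⟨?_, ?_, ?_, ?_, ?_⟩
  · intro t ht
    rw [hγp t]
    exact zpos ht
  · rw [hγp]; exact zzero x
  · intro t ht
    rw [hγm t]
    have hneg : -t ∈ Ioo 0 (2 * Real.arctan x) := ⟨by linarith [ht.2], by linarith [ht.1]⟩
    have := zpos hneg
    rw [Real.sin_neg, Real.cos_neg] at this
    simp only
    nlinarith
  · rw [hγm]
    simp only [Real.sin_neg, Real.cos_neg]
    have := zzero x
    linarith
  · rw [hγp, hγm]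
    simp only [Real.sin_neg, Real.cos_neg, Prod.mk.injEq]
    have := zzero x
    refine ⟨by ring, by trivial, by linarith⟩
end

section
/- For 0 < x < 1, the solution of (ẋ, ẏ, ż) = (z - 1, y, x + y) starting at (x,0,0) first returns to the plane z = 0 at time τ⁺(x) = log((1+x)/(1-x)) > 0, i.e., its z-component vanishes at this time and is positive on (0, τ⁺(x)). -/
open Set Real

private noncomputable def Vfield : ℝ × ℝ × ℝ → ℝ × ℝ × ℝ :=
  fun p => (p.2.2 - 1, p.2.1, p.1 + p.2.1)

private lemma Vlip : LipschitzWith 2 Vfield := by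
  rw [lipschitzWith_iff_dist_le_mul]
  intro p q
  obtain ⟨a, b, c⟩ := p
  obtain ⟨a', b', c'⟩ := q
  simp only [Vfield, Prod.dist_eq, Real.dist_eq]
  have h1 : |c - 1 - (c' - 1)| = |c - c'| := by ring_nf
  rw [h1]
  have h2 : |a + b - (a' + b')| ≤ |a - a'| + |b - b'| := by
    have := abs_add_le (a - a') (b - b')
    rw [show a + b - (a' + b') = a - a' + (b - b') by ring]
    exact this
  have hA : |a - a'| ≤ max |a - a'| (max |b - b'| |c - c'|) := le_max_left _ _
  have hB : |b - b'| ≤ max |a - a'| (max |b - b'| |c - c'|) :=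
    le_trans (le_max_left _ _) (le_max_right _ _)
  have hC : |c - c'| ≤ max |a - a'| (max |b - b'| |c - c'|) :=
    le_trans (le_max_right _ _) (le_max_right _ _)
  push_cast
  refine max_le ?_ (max_le ?_ ?_) <;> nlinarith [abs_nonneg (a - a'), abs_nonneg (b - b'), abs_nonneg (c - c')]

private noncomputable def gflow (x : ℝ) : ℝ → ℝ × ℝ × ℝ :=
  fun t => (x * Real.cosh t - Real.sinh t, 0, x * Real.sinh t + 1 - Real.cosh t)

private lemma gflow_deriv (x t : ℝ) :
    HasDerivAt (gflow x) (Vfield (gflow x t)) t := by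
  have h1 : HasDerivAt (fun t => x * Real.cosh t - Real.sinh t)
      (x * Real.sinh t - Real.cosh t) t :=
    ((Real.hasDerivAt_cosh t).const_mul x).sub (Real.hasDerivAt_sinh t)
  have h2 : HasDerivAt (fun _ : ℝ => (0 : ℝ)) 0 t := hasDerivAt_const _ _
  have h3 : HasDerivAt (fun t => x * Real.sinh t + 1 - Real.cosh t)
      (x * Real.cosh t - Real.sinh t) t := by
    have := (((Real.hasDerivAt_sinh t).const_mul x).add_const 1).sub (Real.hasDerivAt_cosh t)
    exact this
  have := (h1.prodMk (h2.prodMk h3))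
  convert this using 1
  · rfl
  simp [Vfield, gflow]
  ring

/-- For `0 < x < 1`, the solution of `(ẋ,ẏ,ż) = (z-1, y, x+y)` starting at `(x,0,0)`
first returns to the plane `z = 0` at time `τ⁺(x) = log((1+x)/(1-x)) > 0`: its third
component is positive on `(0, τ⁺(x))` and vanishes at `τ⁺(x)`. -/
theorem stmt3 (x : ℝ) (hx0 : 0 < x) (hx1 : x < 1)
    (γ : ℝ → ℝ × ℝ × ℝ)
    (h0 : γ 0 = (x, 0, 0))
    (hode : ∀ t, HasDerivAt γ
      ((γ t).2.2 - 1, (γ t).2.1, (γ t).1 + (γ t).2.1) t) :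
    0 < Real.log ((1 + x) / (1 - x)) ∧
    (γ (Real.log ((1 + x) / (1 - x)))).2.2 = 0 ∧
    ∀ t ∈ Ioo 0 (Real.log ((1 + x) / (1 - x))), 0 < (γ t).2.2 := by
  set T := Real.log ((1 + x) / (1 - x)) with hT
  have hx1' : 0 < 1 - x := by linarith
  have hx0' : 0 < 1 + x := by linarith
  have hratio : (1 : ℝ) < (1 + x) / (1 - x) := by
    rw [lt_div_iff₀ hx1']; linarith
  have hTpos : 0 < T := Real.log_pos hratio
  have hexpT : Real.exp T = (1 + x) / (1 - x) := Real.exp_log (by positivity)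
  -- uniqueness: γ = gflow x on [0, T]
  have heq : EqOn γ (gflow x) (Icc 0 T) := by
    apply ODE_solution_unique (v := fun _ => Vfield) (K := 2) (fun _ => Vlip)
    · exact fun t _ => (hode t).continuousAt.continuousWithinAt
    · intro t _
      exact ((hode t).hasDerivWithinAt)
    · exact fun t _ => (gflow_deriv x t).continuousAt.continuousWithinAt
    · intro t _
      exact (gflow_deriv x t).hasDerivWithinAt
    · simp [h0, gflow]
  refine ⟨hTpos, ?_, ?_⟩
  · have := heq (right_mem_Icc.mpr hTpos.le)
    rw [this]
    simp only [gflow, Real.sinh_eq, Real.cosh_eq]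
    rw [Real.exp_neg, hexpT]
    field_simp
    ring
  · intro t ht
    have := heq ⟨ht.1.le, ht.2.le⟩
    rw [this]
    simp only [gflow, Real.sinh_eq, Real.cosh_eq]
    rw [Real.exp_neg]
    have hu : 0 < Real.exp t := Real.exp_pos t
    have hu1 : 1 < Real.exp t := by
      rw [show (1 : ℝ) = Real.exp 0 by simp]
      exact Real.exp_lt_exp.mpr ht.1
    have hu2 : Real.exp t < (1 + x) / (1 - x) := by
      rw [← hexpT]
      exact Real.exp_lt_exp.mpr ht.2
    have hv' : Real.exp t * (1 - x) < 1 + x := (lt_div_iff₀ hx1').mp hu2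
    have hinv : Real.exp t * (Real.exp t)⁻¹ = 1 := mul_inv_cancel₀ hu.ne'
    have key : 0 < (Real.exp t - 1) * ((1 + x) - (1 - x) * Real.exp t) := by
      nlinarith
    nlinarith [key, hinv, hu, mul_pos hu hu]
end

section
/- The Wronskians of the ordered family f₀(u)=u, f₁(u)=u², f₂(u)=u³, f₃(u)=u√(1−4u²), f₄(u)=u² arccos(−√(1−4u²)), f₅(u)=√(1−4u²)−1, f₆(u)=(√(1−4u²)−1)·arccos(−√(1−4u²)) satisfy, on (0, 1/4): W[f₀](u)=u hence the claimed formulas W[f₀,f₁](u)=u² (up to constant), and in particular W[f₀,f₁,f₂,f₃](u) = −96 u⁵/(1−4u²)^{5/2}, which is nonzero on (0, 1/4). -/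
open Set Real

/-- The Wronskian of two functions. -/
noncomputable def wronskian2 (f g : ℝ → ℝ) (u : ℝ) : ℝ :=
  Matrix.det !![f u, g u; deriv f u, deriv g u]

/-- The Wronskian of four functions. -/
noncomputable def wronskian4 (f g h k : ℝ → ℝ) (u : ℝ) : ℝ :=
  Matrix.det !![f u, g u, h u, k u;
                deriv f u, deriv g u, deriv h u, deriv k u;
                iteratedDeriv 2 f u, iteratedDeriv 2 g u, iteratedDeriv 2 h u, iteratedDeriv 2 k u;
                iteratedDeriv 3 f u, iteratedDeriv 3 g u, iteratedDeriv 3 h u, iteratedDeriv 3 k u]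

noncomputable def g1 (u : ℝ) : ℝ := (1 - 8 * u ^ 2) / Real.sqrt (1 - 4 * u ^ 2)
noncomputable def g2 (u : ℝ) : ℝ := (-12 * u + 32 * u ^ 3) / (Real.sqrt (1 - 4 * u ^ 2)) ^ 3

lemma hasDerivAt_s {x : ℝ} (h : (0:ℝ) < 1 - 4 * x ^ 2) :
    HasDerivAt (fun u : ℝ => Real.sqrt (1 - 4 * u ^ 2)) (-4 * x / Real.sqrt (1 - 4 * x ^ 2)) x := by
  have hinner : HasDerivAt (fun u : ℝ => 1 - 4 * u ^ 2) (-(8 * x)) x := by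
    have := ((hasDerivAt_pow 2 x).const_mul 4).const_sub 1
    refine this.congr_deriv ?_
    push_cast; ring
  have hs : (0:ℝ) < Real.sqrt (1 - 4 * x ^ 2) := Real.sqrt_pos.2 h
  have := (Real.hasDerivAt_sqrt h.ne').comp x hinner
  refine this.congr_deriv ?_
  field_simp
  ring

lemma hasDerivAt_f3 {x : ℝ} (h : (0:ℝ) < 1 - 4 * x ^ 2) :
    HasDerivAt (fun u : ℝ => u * Real.sqrt (1 - 4 * u ^ 2)) (g1 x) x := by
  have hs : (0:ℝ) < Real.sqrt (1 - 4 * x ^ 2) := Real.sqrt_pos.2 h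
  have hs2 : Real.sqrt (1 - 4 * x ^ 2) ^ 2 = 1 - 4 * x ^ 2 := Real.sq_sqrt h.le
  have := (hasDerivAt_id x).mul (hasDerivAt_s h)
  refine this.congr_deriv ?_
  unfold g1
  field_simp
  simp only [id]; linear_combination hs2

lemma hasDerivAt_g1 {x : ℝ} (h : (0:ℝ) < 1 - 4 * x ^ 2) :
    HasDerivAt g1 (g2 x) x := by
  have hs : (0:ℝ) < Real.sqrt (1 - 4 * x ^ 2) := Real.sqrt_pos.2 h
  have hs2 : Real.sqrt (1 - 4 * x ^ 2) ^ 2 = 1 - 4 * x ^ 2 := Real.sq_sqrt h.le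
  have hnum : HasDerivAt (fun u : ℝ => 1 - 8 * u ^ 2) (-(16 * x)) x := by
    have := ((hasDerivAt_pow 2 x).const_mul 8).const_sub 1
    refine this.congr_deriv ?_
    push_cast; ring
  have := hnum.div (hasDerivAt_s h) hs.ne'
  refine this.congr_deriv ?_
  unfold g2
  generalize hq : Real.sqrt (1 - 4 * x ^ 2) = s at hs hs2 ⊢
  field_simp
  linear_combination (-16 * x) * hs2

lemma hasDerivAt_g2 {x : ℝ} (h : (0:ℝ) < 1 - 4 * x ^ 2) :
    HasDerivAt g2 (-12 / (Real.sqrt (1 - 4 * x ^ 2)) ^ 5) x := by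
  have hs : (0:ℝ) < Real.sqrt (1 - 4 * x ^ 2) := Real.sqrt_pos.2 h
  have hs2 : Real.sqrt (1 - 4 * x ^ 2) ^ 2 = 1 - 4 * x ^ 2 := Real.sq_sqrt h.le
  have hnum : HasDerivAt (fun u : ℝ => -12 * u + 32 * u ^ 3) (-12 + 32 * (3 * x ^ 2)) x := by
    have h1 := (hasDerivAt_pow 3 x).const_mul (32:ℝ)
    have h2 := (hasDerivAt_id x).const_mul (-12 : ℝ)
    have h3 := h2.add h1
    refine h3.congr_deriv ?_
    push_cast; ring
  have hden : HasDerivAt (fun u : ℝ => (Real.sqrt (1 - 4 * u ^ 2)) ^ 3)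
      (3 * (Real.sqrt (1 - 4 * x ^ 2)) ^ 2 * (-4 * x / Real.sqrt (1 - 4 * x ^ 2))) x := by
    exact ((hasDerivAt_s h).pow 3).congr_deriv (by push_cast; ring)
  have := hnum.div hden (by positivity)
  refine this.congr_deriv ?_
  generalize hq : Real.sqrt (1 - 4 * x ^ 2) = s at hs hs2 ⊢
  field_simp
  linear_combination (-12 + 96 * x ^ 2) * hs2

lemma isOpen_U : IsOpen {y : ℝ | (0:ℝ) < 1 - 4 * y ^ 2} :=
  isOpen_lt continuous_const (by continuity)

lemma ev_deriv_f3 {x : ℝ} (h : (0:ℝ) < 1 - 4 * x ^ 2) :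
    deriv (fun u : ℝ => u * Real.sqrt (1 - 4 * u ^ 2)) =ᶠ[nhds x] g1 := by
  filter_upwards [isOpen_U.mem_nhds h] with y hy using (hasDerivAt_f3 hy).deriv

lemma ev_deriv2_f3 {x : ℝ} (h : (0:ℝ) < 1 - 4 * x ^ 2) :
    deriv (deriv (fun u : ℝ => u * Real.sqrt (1 - 4 * u ^ 2))) =ᶠ[nhds x] g2 := by
  filter_upwards [isOpen_U.mem_nhds h] with y hy
  rw [(ev_deriv_f3 hy).deriv_eq]
  exact (hasDerivAt_g1 hy).deriv

lemma itd2_f3 {x : ℝ} (h : (0:ℝ) < 1 - 4 * x ^ 2) :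
    iteratedDeriv 2 (fun u : ℝ => u * Real.sqrt (1 - 4 * u ^ 2)) x = g2 x := by
  rw [iteratedDeriv_succ, iteratedDeriv_one,
    (ev_deriv_f3 h).deriv_eq]
  exact (hasDerivAt_g1 h).deriv

lemma itd3_f3 {x : ℝ} (h : (0:ℝ) < 1 - 4 * x ^ 2) :
    iteratedDeriv 3 (fun u : ℝ => u * Real.sqrt (1 - 4 * u ^ 2)) x
      = -12 / (Real.sqrt (1 - 4 * x ^ 2)) ^ 5 := by
  rw [iteratedDeriv_succ, iteratedDeriv_succ, iteratedDeriv_one,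
    (ev_deriv2_f3 h).deriv_eq]
  exact (hasDerivAt_g2 h).deriv

lemma dconstmul (c x : ℝ) : deriv (HMul.hMul c) x = c := by
  simpa using ((hasDerivAt_id x).const_mul c).deriv

lemma dconstmulF (c : ℝ) : deriv (fun x : ℝ => c * x) = fun _ => c := by
  funext x; simpa using ((hasDerivAt_id x).const_mul c).deriv

lemma dpoly1 (x : ℝ) : deriv (fun u : ℝ => u) x = 1 := by norm_num
lemma dpoly2 (x : ℝ) : deriv (fun u : ℝ => u ^ 2) x = 2 * x := by norm_num
lemma dpoly3 (x : ℝ) : deriv (fun u : ℝ => u ^ 3) x = 3 * x ^ 2 := by norm_num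

lemma itd_poly1_2 (x : ℝ) : iteratedDeriv 2 (fun u : ℝ => u) x = 0 := by
  rw [iteratedDeriv_succ, iteratedDeriv_one]; norm_num
lemma itd_poly1_3 (x : ℝ) : iteratedDeriv 3 (fun u : ℝ => u) x = 0 := by
  rw [iteratedDeriv_succ, iteratedDeriv_succ, iteratedDeriv_one]; norm_num
lemma itd_poly2_2 (x : ℝ) : iteratedDeriv 2 (fun u : ℝ => u ^ 2) x = 2 := by
  rw [iteratedDeriv_succ, iteratedDeriv_one, show deriv (fun u : ℝ => u ^ 2) = fun u => 2 * u from funext dpoly2]; norm_num [dconstmul]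
lemma itd_poly2_3 (x : ℝ) : iteratedDeriv 3 (fun u : ℝ => u ^ 2) x = 0 := by
  rw [iteratedDeriv_succ, iteratedDeriv_succ, iteratedDeriv_one, show deriv (fun u : ℝ => u ^ 2) = fun u => 2 * u from funext dpoly2]; norm_num [dconstmulF]
lemma itd_poly3_2 (x : ℝ) : iteratedDeriv 2 (fun u : ℝ => u ^ 3) x = 6 * x := by
  rw [iteratedDeriv_succ, iteratedDeriv_one, show deriv (fun u : ℝ => u ^ 3) = fun u => 3 * u ^ 2 from funext dpoly3]; norm_num; ring
lemma itd_poly3_3 (x : ℝ) : iteratedDeriv 3 (fun u : ℝ => u ^ 3) x = 6 := by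
  rw [iteratedDeriv_succ, iteratedDeriv_succ, iteratedDeriv_one, show deriv (fun u : ℝ => u ^ 3) = fun u => 3 * u ^ 2 from funext dpoly3]; norm_num [dconstmul]

/-- On `(0, 1/4)` the initial Wronskians of the family
`f₀(u)=u, f₁(u)=u², f₂(u)=u³, f₃(u)=u√(1−4u²), …` satisfy `W[f₀](u) = u`,
`W[f₀,f₁](u) = u²`, and `W[f₀,f₁,f₂,f₃](u) = −96u⁵/(1−4u²)^{5/2} ≠ 0`. -/
theorem stmt13 :
    ∀ u ∈ Ioo (0 : ℝ) (1 / 4),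
      (fun u : ℝ => u) u = u ∧
      wronskian2 (fun u => u) (fun u => u ^ 2) u = u ^ 2 ∧
      wronskian4 (fun u => u) (fun u => u ^ 2) (fun u => u ^ 3)
          (fun u => u * Real.sqrt (1 - 4 * u ^ 2)) u
        = -96 * u ^ 5 / (1 - 4 * u ^ 2) ^ ((5 : ℝ) / 2) ∧
      wronskian4 (fun u => u) (fun u => u ^ 2) (fun u => u ^ 3)
          (fun u => u * Real.sqrt (1 - 4 * u ^ 2)) u ≠ 0 := by
  intro u hu
  obtain ⟨hu0, hu1⟩ := hu
  have h : (0:ℝ) < 1 - 4 * u ^ 2 := by nlinarith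
  have hs : (0:ℝ) < Real.sqrt (1 - 4 * u ^ 2) := Real.sqrt_pos.2 h
  have hs2 : Real.sqrt (1 - 4 * u ^ 2) ^ 2 = 1 - 4 * u ^ 2 := Real.sq_sqrt h.le
  have hpow : ((1:ℝ) - 4 * u ^ 2) ^ ((5:ℝ) / 2) = Real.sqrt (1 - 4 * u ^ 2) ^ 5 := by
    rw [show ((5:ℝ)/2) = (1/2 : ℝ) * (5:ℕ) by norm_num, Real.rpow_mul h.le,
      Real.rpow_natCast, ← Real.sqrt_eq_rpow]
  have hW : wronskian4 (fun u => u) (fun u => u ^ 2) (fun u => u ^ 3)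
      (fun u => u * Real.sqrt (1 - 4 * u ^ 2)) u
      = -96 * u ^ 5 / (1 - 4 * u ^ 2) ^ ((5 : ℝ) / 2) := by
    rw [hpow]
    unfold wronskian4
    rw [dpoly1, dpoly2, dpoly3, (hasDerivAt_f3 h).deriv, itd2_f3 h, itd3_f3 h,
      itd_poly1_2, itd_poly1_3, itd_poly2_2, itd_poly2_3, itd_poly3_2, itd_poly3_3]
    unfold g1 g2
    simp [Matrix.det_succ_row_zero, Fin.sum_univ_succ, Fin.succAbove,
      Matrix.cons_val_succ, show ((Fin.castSucc 2 : Fin 4)) = 2 from rfl]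
    generalize hq : Real.sqrt (1 - 4 * u ^ 2) = s at hs hs2 ⊢
    field_simp
    ring_nf
    linear_combination (-12*s^4 - 48*u^2*s^2 + 24*u^2) * hs2
  refine ⟨rfl, ?_, hW, ?_⟩
  · unfold wronskian2
    rw [Matrix.det_fin_two_of, dpoly1, dpoly2]
    ring
  · rw [hW]
    have hnum : (-96:ℝ) * u ^ 5 < 0 := by nlinarith [pow_pos hu0 5]
    have hden : (0:ℝ) < (1 - 4 * u ^ 2) ^ ((5:ℝ) / 2) := Real.rpow_pos_of_pos h _
    exact ne_of_lt (div_neg_of_neg_of_pos hnum hden)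
end

section
/- The seven functions u, u², u³, u√(1−4u²), u² arccos(−√(1−4u²)), √(1−4u²)−1, (√(1−4u²)−1) arccos(−√(1−4u²)) are linearly independent over ℝ as functions on (0, 1/4). -/
open Set Real

private lemma analyticAt_rsin (x : ℝ) : AnalyticAt ℝ Real.sin x := by
  have h1 : AnalyticAt ℝ (fun t : ℝ => (Complex.sin (t : ℂ)).re) x := by
    have := (Complex.reCLM.analyticAt _).comp
      (((Complex.differentiable_sin.analyticAt _).restrictScalars).comp
        (Complex.ofRealCLM.analyticAt ((x : ℝ))))
    simpa [Function.comp_def] using this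
  have h2 : Real.sin = fun t : ℝ => (Complex.sin (t : ℂ)).re := by
    funext t; rw [Complex.sin_ofReal_re]
  rw [h2]; exact h1

private lemma analyticAt_rcos (x : ℝ) : AnalyticAt ℝ Real.cos x := by
  have h1 : AnalyticAt ℝ (fun t : ℝ => (Complex.cos (t : ℂ)).re) x := by
    have := (Complex.reCLM.analyticAt _).comp
      (((Complex.differentiable_cos.analyticAt _).restrictScalars).comp
        (Complex.ofRealCLM.analyticAt ((x : ℝ))))
    simpa [Function.comp_def] using this
  have h2 : Real.cos = fun t : ℝ => (Complex.cos (t : ℂ)).re := by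
    funext t; rw [Complex.cos_ofReal_re]
  rw [h2]; exact h1

set_option maxHeartbeats 1000000 in
/-- The seven functions `u, u², u³, u√(1−4u²), u² arccos(−√(1−4u²)), √(1−4u²)−1,
(√(1−4u²)−1) arccos(−√(1−4u²))` are linearly independent over `ℝ` on `(0, 1/4)`. -/
theorem stmt14 (c : Fin 7 → ℝ)
    (h : ∀ u ∈ Ioo (0 : ℝ) (1 / 4),
      c 0 * u + c 1 * u ^ 2 + c 2 * u ^ 3
        + c 3 * (u * Real.sqrt (1 - 4 * u ^ 2))
        + c 4 * (u ^ 2 * Real.arccos (-Real.sqrt (1 - 4 * u ^ 2)))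
        + c 5 * (Real.sqrt (1 - 4 * u ^ 2) - 1)
        + c 6 * ((Real.sqrt (1 - 4 * u ^ 2) - 1)
            * Real.arccos (-Real.sqrt (1 - 4 * u ^ 2))) = 0) :
    ∀ i, c i = 0 := by
  have pi_pos := Real.pi_pos
  -- the substituted function g(t), defined for all real t
  set g : ℝ → ℝ := fun t =>
      c 0 * (Real.sin t / 2) + c 1 * (Real.sin t / 2) ^ 2 + c 2 * (Real.sin t / 2) ^ 3
        + c 3 * ((Real.sin t / 2) * Real.cos t)
        + c 4 * ((Real.sin t / 2) ^ 2 * (Real.pi - t))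
        + c 5 * (Real.cos t - 1)
        + c 6 * ((Real.cos t - 1) * (Real.pi - t)) with hg
  -- g vanishes on (0, π/6)
  have hzero : ∀ t ∈ Ioo (0 : ℝ) (Real.pi / 6), g t = 0 := by
    intro t ht
    obtain ⟨ht0, ht6⟩ := ht
    have htpi2 : t < Real.pi / 2 := by nlinarith
    have hsin_pos : 0 < Real.sin t := Real.sin_pos_of_pos_of_lt_pi ht0 (by nlinarith)
    have hsin_lt : Real.sin t < 1 / 2 := by
      have := Real.strictMonoOn_sin (a := t) (b := Real.pi / 6)
        ⟨by linarith, by linarith⟩ ⟨by linarith, by linarith⟩ ht6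
      rwa [Real.sin_pi_div_six] at this
    have hcos_pos : 0 < Real.cos t := Real.cos_pos_of_mem_Ioo ⟨by linarith, htpi2⟩
    set u := Real.sin t / 2 with hu
    have hmem : u ∈ Ioo (0 : ℝ) (1 / 4) := ⟨by positivity, by rw [hu]; linarith⟩
    have hsq : 1 - 4 * u ^ 2 = Real.cos t ^ 2 := by
      have := Real.sin_sq_add_cos_sq t
      rw [hu]; ring_nf; nlinarith [Real.sin_sq_add_cos_sq t]
    have hsqrt : Real.sqrt (1 - 4 * u ^ 2) = Real.cos t := by
      rw [hsq, Real.sqrt_sq hcos_pos.le]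
    have harc : Real.arccos (-Real.sqrt (1 - 4 * u ^ 2)) = Real.pi - t := by
      rw [hsqrt, Real.arccos_neg, Real.arccos_cos ht0.le (by linarith)]
    have := h u hmem
    rw [harc, hsqrt] at this
    rw [hg]
    simpa [hu] using this
  -- g is analytic on ℝ
  have hganal : AnalyticOnNhd ℝ g univ := by
    intro x _
    have hs := analyticAt_rsin x
    have hc := analyticAt_rcos x
    have hid : AnalyticAt ℝ (fun t : ℝ => t) x := analyticAt_id
    have hconst : ∀ a : ℝ, AnalyticAt ℝ (fun _ : ℝ => a) x := fun a => analyticAt_const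
    rw [hg]
    exact ((((((((hconst (c 0)).mul (hs.div (hconst 2) (by norm_num))).add
      ((hconst (c 1)).mul ((hs.div (hconst 2) (by norm_num)).pow 2))).add
      ((hconst (c 2)).mul ((hs.div (hconst 2) (by norm_num)).pow 3))).add
      ((hconst (c 3)).mul ((hs.div (hconst 2) (by norm_num)).mul hc))).add
      ((hconst (c 4)).mul (((hs.div (hconst 2) (by norm_num)).pow 2).mul
        ((hconst Real.pi).sub hid)))).add
      ((hconst (c 5)).mul (hc.sub (hconst 1)))).add
      ((hconst (c 6)).mul ((hc.sub (hconst 1)).mul ((hconst Real.pi).sub hid))))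
  -- identity theorem: g = 0 everywhere
  have hall : ∀ t : ℝ, g t = 0 := by
    have hev : g =ᶠ[nhds (Real.pi / 12)] 0 := by
      have hmem : Real.pi / 12 ∈ Ioo (0 : ℝ) (Real.pi / 6) := ⟨by linarith, by linarith⟩
      filter_upwards [isOpen_Ioo.mem_nhds hmem] with t ht
      exact hzero t ht
    have := hganal.eqOn_zero_of_preconnected_of_eventuallyEq_zero
      isPreconnected_univ (mem_univ (Real.pi / 12)) hev
    intro t; exact this (mem_univ t)
  -- evaluations
  have e1 := hall Real.pi
  have e2 := hall (Real.pi + 2 * Real.pi)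
  have e3 := hall (Real.pi / 2)
  have e4 := hall (Real.pi / 2 + 2 * Real.pi)
  have e5 := hall (-(Real.pi / 2))
  simp only [hg, Real.sin_pi, Real.cos_pi, Real.sin_add_two_pi, Real.cos_add_two_pi,
    Real.sin_pi_div_two, Real.cos_pi_div_two, Real.sin_neg, Real.cos_neg] at e1 e2 e3 e4 e5
  have hc5 : c 5 = 0 := by nlinarith [e1]
  have hc6 : c 6 = 0 := by nlinarith [e1, e2]
  have hc4 : c 4 = 0 := by nlinarith [e3, e4, hc5, hc6]
  -- now use arcsin(3/5)
  set a := Real.arcsin (3 / 5) with ha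
  have hsa : Real.sin a = 3 / 5 := Real.sin_arcsin (by norm_num) (by norm_num)
  have hca : Real.cos a = 4 / 5 := by
    rw [ha, Real.cos_arcsin]
    rw [show (1 : ℝ) - (3 / 5) ^ 2 = (4 / 5) ^ 2 by norm_num]
    exact Real.sqrt_sq (by norm_num)
  have e6 := hall a
  have e7 := hall (Real.pi - a)
  simp only [hg, Real.sin_pi_sub, Real.cos_pi_sub, hsa, hca] at e6 e7
  rw [hc4, hc5, hc6] at e3 e5 e6 e7
  norm_num at e3 e5 e6 e7
  have hc1 : c 1 = 0 := by linarith
  have hc2 : c 2 = 0 := by linarith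
  have hc0 : c 0 = 0 := by linarith
  have hc3 : c 3 = 0 := by linarith
  intro i
  fin_cases i <;> assumption
end
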